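/- For every k ≥ 3 and every m > 0 there exist unique natural numbers a, b, l such that m = A_a(k,b) + l, where a is maximal with A_a(k,0) ≤ m and b is maximal with A_a(k,b) ≤ m. -/

import Mathlib

/-- The parametrized Ackermann function: `A a k b` is `A_a(k,b)`. -/
def A : ℕ → ℕ → ℕ → ℕ
  | 0, _, b => b + 1
  | a+1, k, 0 => (fun x => A a k x)^[k] 0
  | a+1, k, b+1 => (fun x => A a k x)^[k] (A (a+1) k b)
  termination_by a _ b => (a, b)

/-- `m = A_a(k,b) + l` is the `k`-normal form of `m`: `a` is maximal with
`A_a(k,0) ≤ m` and `b` is maximal with `A_a(k,b) ≤ m`. -/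
def IsNF (k m a b l : ℕ) : Prop :=
  m = A a k b + l ∧ A a k 0 ≤ m ∧
  (∀ a', A a' k 0 ≤ m → a' ≤ a) ∧
  (∀ b', A a k b' ≤ m → b' ≤ b)

/-- The graph of the hereditary base change operation `m ↦ m[k←k+1]`. -/
inductive BC (k : ℕ) : ℕ → ℕ → Prop
  | zero : BC k 0 0
  | step {a b l a' b'} :
      IsNF k (A a k b + l) a b l → BC k a a' → BC k b b' →
      BC k (A a k b + l) (A a' (k+1) b' + l)


lemma iter_lt {f : ℕ → ℕ} (hf : ∀ x, x < f x) : ∀ n x, x < f^[n+1] x := by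
  intro n
  induction n with
  | zero => intro x; simpa using hf x
  | succ n ih =>
    intro x
    rw [Function.iterate_succ_apply]
    exact lt_trans (hf x) (ih (f x))

lemma lt_A (k : ℕ) (hk : 1 ≤ k) : ∀ a b, b < A a k b := by
  intro a
  induction a with
  | zero => intro b; simp [A]
  | succ a ih =>
    obtain ⟨k', rfl⟩ : ∃ k', k = k' + 1 := ⟨k - 1, (Nat.succ_pred_eq_of_pos hk).symm⟩
    intro b
    induction b with
    | zero =>
      show 0 < A (a+1) (k'+1) 0
      simp only [A]
      exact iter_lt ih k' 0
    | succ b ihb =>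
      show b + 1 < A (a+1) (k'+1) (b+1)
      have h1 : A (a+1) (k'+1) b < (fun x => A a (k'+1) x)^[k'+1] (A (a+1) (k'+1) b) :=
        iter_lt ih k' _
      have h2 : A (a+1) (k'+1) (b+1) = (fun x => A a (k'+1) x)^[k'+1] (A (a+1) (k'+1) b) := by
        simp only [A]
      omega

lemma lt_A_zero (k : ℕ) (hk : 2 ≤ k) : ∀ a, a < A a k 0 := by
  intro a
  induction a with
  | zero => simp [A]
  | succ a ih =>
    obtain ⟨k', rfl⟩ : ∃ k', k = k' + 2 := ⟨k - 2, by omega⟩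
    have h2 : A (a+1) (k'+2) 0 = (fun x => A a (k'+2) x)^[k'+2] 0 := by
      simp only [A]
    rw [Function.iterate_succ_apply] at h2
    have h3 : A a (k'+2) 0 < (fun x => A a (k'+2) x)^[k'+1] ((fun x => A a (k'+2) x) 0) :=
      iter_lt (fun x => lt_A (k'+2) (by omega) a x) k' _
    simp only at h3
    omega

/-- Every `m > 0` has a unique `k`-normal form `m = A_a(k,b) + l` with `a`
maximal such that `A_a(k,0) ≤ m` and `b` maximal such that `A_a(k,b) ≤ m`. -/
theorem normal_form_exists_unique (k m : ℕ) (hk : 3 ≤ k) (hm : 0 < m) :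
    ∃! p : ℕ × ℕ × ℕ, IsNF k m p.1 p.2.1 p.2.2 := by
  have hk1 : 1 ≤ k := by omega
  have hk2 : 2 ≤ k := by omega
  have hP0 : A 0 k 0 ≤ m := by simp [A]; omega
  obtain ⟨a, ha, hamax⟩ : ∃ a, A a k 0 ≤ m ∧ ∀ a', A a' k 0 ≤ m → a' ≤ a :=
    ⟨Nat.findGreatest (fun a => A a k 0 ≤ m) m,
     Nat.findGreatest_spec (P := fun a => A a k 0 ≤ m) (Nat.zero_le m) hP0,
     fun a' h => Nat.le_findGreatest (le_trans (le_of_lt (lt_A_zero k hk2 a')) h) h⟩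
  obtain ⟨b, hb, hbmax⟩ : ∃ b, A a k b ≤ m ∧ ∀ b', A a k b' ≤ m → b' ≤ b :=
    ⟨Nat.findGreatest (fun b => A a k b ≤ m) m,
     Nat.findGreatest_spec (P := fun b => A a k b ≤ m) (Nat.zero_le m) ha,
     fun b' h => Nat.le_findGreatest (le_trans (le_of_lt (lt_A k hk1 a b')) h) h⟩
  refine ⟨⟨a, b, m - A a k b⟩, ⟨by simp; omega, ha, hamax, hbmax⟩, ?_⟩
  rintro ⟨a', b', l'⟩ ⟨he, hz, hma, hmb⟩
  simp only at he hz hma hmb ⊢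
  have haa : a' = a := le_antisymm (hamax a' hz) (hma a ha)
  subst haa
  have hbb : b' = b := le_antisymm (hbmax b' (by omega)) (hmb b hb)
  subst hbb
  simp only [Prod.mk.injEq, true_and]
  omega
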